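/- arXiv:1811.04338 — 5 statements merged into one kernel-verified Lean document; each statement's English description precedes it below -/
import Mathlib

section
/- For every integer k ≥ 1, with α_k = arcsin(1/(2(2k+1)^2)), one has (2k+1)·tan α_k < 1/(4k+1). -/
/-- For every integer k ≥ 1, with α_k = arcsin(1/(2(2k+1)²)),
one has (2k+1)·tan α_k < 1/(4k+1). -/
theorem stmt_3 (k : ℕ) (hk : 1 ≤ k) (α : ℝ)
    (hα : α = Real.arcsin (1 / (2 * (2 * (k : ℝ) + 1) ^ 2))) :
    (2 * (k : ℝ) + 1) * Real.tan α < 1 / (4 * (k : ℝ) + 1) := by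
  have hK : (1:ℝ) ≤ (k:ℝ) := by exact_mod_cast hk
  set K : ℝ := (k:ℝ) with hKdef
  set x : ℝ := 1 / (2 * (2 * K + 1) ^ 2) with hxdef
  have hc : (3:ℝ) ≤ 2 * K + 1 := by linarith
  have hx0 : 0 < x := by rw [hxdef]; positivity
  have hxval : x * (2 * (2 * K + 1) ^ 2) = 1 := by
    rw [hxdef]; field_simp
  have hx18 : x ≤ 1 / 18 := by
    rw [hxdef]
    apply div_le_div_of_nonneg_left (by norm_num) (by norm_num)
    nlinarith
  have h2 : x ^ 2 * (4 * (2 * K + 1) ^ 2) = 2 * x := by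
    rw [hxdef]; field_simp; ring
  rw [hα, Real.tan_arcsin]
  set s : ℝ := Real.sqrt (1 - x ^ 2) with hsdef
  have key : (4 * K + 1) / (4 * K + 2) < s := by
    rw [hsdef, show (4*K+1)/(4*K+2) = Real.sqrt (((4*K+1)/(4*K+2))^2) by
      rw [Real.sqrt_sq (by positivity)]]
    apply Real.sqrt_lt_sqrt (by positivity)
    rw [div_pow, div_lt_iff₀ (by positivity)]
    nlinarith [hx0, hx18, h2, hK]
  have hs0 : (0:ℝ) < s := lt_trans (by positivity) key
  have key' : 4 * K + 1 < s * (4 * K + 2) := by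
    rw [div_lt_iff₀ (by positivity)] at key; exact key
  have h3 : (2 * K + 1) * x * (4 * K + 2) = 1 := by linear_combination hxval
  rw [← mul_div_assoc, div_lt_div_iff₀ hs0 (by positivity)]
  nlinarith [key', h3, hK, hs0]
end

section
/- For every integer k ≥ 1, with α_k = arcsin(1/(2(2k+1)^2)) and r_k = (√2/(4k))·(1 - (2k+1)·tan α_k), one has √2/(4k+1) < r_k < √2/(4k). -/
/-- For every integer k ≥ 1, with α_k = arcsin(1/(2(2k+1)²)) and
r_k = (√2/(4k))(1 - (2k+1)·tan α_k), one has √2/(4k+1) < r_k < √2/(4k). -/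
theorem stmt_4 (k : ℕ) (hk : 1 ≤ k) (α r : ℝ)
    (hα : α = Real.arcsin (1 / (2 * (2 * (k : ℝ) + 1) ^ 2)))
    (hr : r = (Real.sqrt 2 / (4 * (k : ℝ))) * (1 - (2 * (k : ℝ) + 1) * Real.tan α)) :
    Real.sqrt 2 / (4 * (k : ℝ) + 1) < r ∧ r < Real.sqrt 2 / (4 * (k : ℝ)) := by
  have hK : (1 : ℝ) ≤ (k : ℝ) := by exact_mod_cast hk
  set K : ℝ := (k : ℝ) with hKdef
  set x : ℝ := 1 / (2 * (2 * K + 1) ^ 2) with hxdef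
  have hx0 : 0 < x := by positivity
  have hx1 : x < 1 := by
    rw [hxdef, div_lt_one (by nlinarith)]
    nlinarith
  have h1mx : 0 < 1 - x ^ 2 := by nlinarith
  set s : ℝ := Real.sqrt (1 - x ^ 2) with hsdef
  have hs0 : 0 < s := Real.sqrt_pos.mpr h1mx
  have hs2 : s ^ 2 = 1 - x ^ 2 := Real.sq_sqrt h1mx.le
  have htan : Real.tan α = x / s := by rw [hα, Real.tan_arcsin]
  have hc : 0 < Real.sqrt 2 := by positivity
  have ht0 : 0 < x / s := div_pos hx0 hs0
  -- key inequality: (4K+1)(2K+1)·x < s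
  have hy : (4 * K + 1) * (2 * K + 1) * x < s := by
    have hy0 : 0 < (4 * K + 1) * (2 * K + 1) * x := by positivity
    have hxval : x * (2 * (2 * K + 1) ^ 2) = 1 := by
      rw [hxdef]; field_simp
    have hsq : ((4 * K + 1) * (2 * K + 1) * x) ^ 2 < s ^ 2 := by
      rw [hs2]
      nlinarith [sq_nonneg x, hxval, hx0, hK]
    nlinarith [hsq, hy0, hs0]
  have ht : (4 * K + 1) * (2 * K + 1) * (x / s) < 1 := by
    rw [← mul_div_assoc, div_lt_one hs0]; exact hy
  constructor
  · rw [hr, htan]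
    have hK4 : (0:ℝ) < 4 * K := by linarith
    have hK41 : (0:ℝ) < 4 * K + 1 := by linarith
    have heq : Real.sqrt 2 / (4 * K) * (1 - (2 * K + 1) * (x / s)) - Real.sqrt 2 / (4 * K + 1)
        = Real.sqrt 2 * (1 - (4 * K + 1) * (2 * K + 1) * (x / s)) / ((4 * K) * (4 * K + 1)) := by
      field_simp
      ring
    have hnum : 0 < Real.sqrt 2 * (1 - (4 * K + 1) * (2 * K + 1) * (x / s)) / ((4 * K) * (4 * K + 1)) :=
      div_pos (mul_pos hc (by linarith)) (by positivity)
    linarith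
  · rw [hr, htan]
    have h2 : 1 - (2 * K + 1) * (x / s) < 1 := by nlinarith [ht0, hK]
    have h3 : 0 < Real.sqrt 2 / (4 * K) := by positivity
    nlinarith [mul_lt_mul_of_pos_left h2 h3]
end

section
/- For every integer k ≥ 1, with α_k = arcsin(1/(2(2k+1)^2)) and r_k = (√2/(4k))·(1 - (2k+1)·tan α_k), the following chain of strict inequalities holds: 2·k·r_k < √2/2 < √2/(2·cos α_k) < (2k+1)·r_k. -/
/-- For every integer k ≥ 1, with α_k = arcsin(1/(2(2k+1)²)) and
r_k = (√2/(4k))(1 - (2k+1)·tan α_k), one has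
2·k·r_k < √2/2 < √2/(2·cos α_k) < (2k+1)·r_k. -/
theorem stmt_5 (k : ℕ) (hk : 1 ≤ k) (α r : ℝ)
    (hα : α = Real.arcsin (1 / (2 * (2 * (k : ℝ) + 1) ^ 2)))
    (hr : r = (Real.sqrt 2 / (4 * (k : ℝ))) * (1 - (2 * (k : ℝ) + 1) * Real.tan α)) :
    2 * (k : ℝ) * r < Real.sqrt 2 / 2 ∧
    Real.sqrt 2 / 2 < Real.sqrt 2 / (2 * Real.cos α) ∧
    Real.sqrt 2 / (2 * Real.cos α) < (2 * (k : ℝ) + 1) * r := by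
  have hk1 : (1:ℝ) ≤ (k:ℝ) := by exact_mod_cast hk
  set n : ℝ := 2 * (k:ℝ) + 1 with hn
  have hn3 : 3 ≤ n := by rw [hn]; linarith
  set s : ℝ := 1 / (2 * n ^ 2) with hs
  have hn0 : (0:ℝ) < n := by linarith
  have hspos : 0 < s := by rw [hs]; positivity
  have hs1 : s < 1 := by
    rw [hs, div_lt_one (by positivity)]; nlinarith
  have hsin : Real.sin α = s := by
    rw [hα, Real.sin_arcsin (by linarith) (by linarith)]
  have hcos : Real.cos α = Real.sqrt (1 - s ^ 2) := by
    rw [hα, Real.cos_arcsin]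
  have hrad : (0:ℝ) < 1 - s ^ 2 := by nlinarith
  have hcpos : 0 < Real.cos α := by rw [hcos]; exact Real.sqrt_pos.2 hrad
  have hclt1 : Real.cos α < 1 := by
    rw [hcos]
    nlinarith [Real.sq_sqrt hrad.le, Real.sqrt_nonneg (1 - s ^ 2)]
  have hckey : 1 - 1 / (2 * n) < Real.cos α := by
    rw [hcos]
    have hnn : (0:ℝ) ≤ 1 - 1 / (2 * n) := by
      rw [sub_nonneg, div_le_one (by positivity)]; linarith
    apply (Real.lt_sqrt hnn).2
    rw [hs, ← sub_pos]
    have e : 1 - (1 / (2 * n ^ 2)) ^ 2 - (1 - 1 / (2 * n)) ^ 2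
        = (4 * n ^ 3 - n ^ 2 - 1) / (4 * n ^ 4) := by
      field_simp
      ring
    rw [e]
    apply div_pos _ (by positivity)
    nlinarith
  have htan : Real.tan α = s / Real.cos α := by
    rw [Real.tan_eq_sin_div_cos, hsin]
  have h2pos : (0:ℝ) < Real.sqrt 2 := by positivity
  have htanpos : 0 < Real.tan α := by rw [htan]; positivity
  have hkn : (k:ℝ) = (n - 1) / 2 := by rw [hn]; ring
  have hns : n ^ 2 * s = 1 / 2 := by rw [hs]; field_simp
  have hne : n - 1 ≠ 0 := by intro h; linarith
  refine ⟨?_, ?_, ?_⟩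
  · rw [hr, hkn]
    have heq : 2 * ((n - 1) / 2) * (Real.sqrt 2 / (4 * ((n - 1) / 2)) * (1 - n * Real.tan α))
        = Real.sqrt 2 / 2 - Real.sqrt 2 / 2 * (n * Real.tan α) := by
      field_simp
      ring
    rw [heq]
    have h1 : 0 < Real.sqrt 2 / 2 * (n * Real.tan α) := by positivity
    linarith
  · exact div_lt_div_of_pos_left h2pos (by linarith) (by linarith)
  · rw [hr, htan, hkn, ← sub_pos]
    have hce : Real.cos α ≠ 0 := ne_of_gt hcpos
    have heq : n * (Real.sqrt 2 / (4 * ((n - 1) / 2)) * (1 - n * (s / Real.cos α)))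
        - Real.sqrt 2 / (2 * Real.cos α)
        = Real.sqrt 2 * ((n * Real.cos α - n ^ 2 * s) - (n - 1)) / (2 * (n - 1) * Real.cos α) := by
      field_simp
      ring
    rw [heq, hns]
    apply div_pos
    · have h := mul_lt_mul_of_pos_left hckey hn0
      have e : n * (1 - 1 / (2 * n)) = n - 1 / 2 := by field_simp
      rw [e] at h
      have key : n - 1 / 2 < n * Real.cos α := h
      have : 0 < (n * Real.cos α - 1 / 2) - (n - 1) := by linarith
      positivity
    · have : (0:ℝ) < n - 1 := by linarith
      positivity
end

section
/- Let θ_1, …, θ_n ∈ ℝ with n ≤ 5 (the directions of at most five edges emanating from a common vertex). Then there exists θ ∈ ℝ such that for every i ∈ {1, …, n} and every integer m, the angular distance between θ_i and θ + m·(π/3) is strictly greater than π/37; that is, |θ_i - θ - m·(π/3) - 2π·t| > π/37 for all integers m and t. -/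
open Real

private lemma stmt_7_key (x : ℝ) (k k' : Fin 6) (m t m' t' : ℤ)
    (h1 : |x - (k : ℝ) * (π / 18) - (m : ℝ) * (π / 3) - 2 * π * (t : ℝ)| ≤ π / 37)
    (h2 : |x - (k' : ℝ) * (π / 18) - (m' : ℝ) * (π / 3) - 2 * π * (t' : ℝ)| ≤ π / 37) :
    k = k' := by
  have hπ := Real.pi_pos
  set K : ℤ := ((k' : ℤ) - (k : ℤ)) + 6 * (m' - m) + 36 * (t' - t) with hK
  have hdiff : |(K : ℝ) * (π / 18)| ≤ 2 * (π / 37) := by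
    have := abs_sub_abs_le_abs_sub (x - (k : ℝ) * (π / 18) - (m : ℝ) * (π / 3) - 2 * π * (t : ℝ))
      (x - (k' : ℝ) * (π / 18) - (m' : ℝ) * (π / 3) - 2 * π * (t' : ℝ))
    have h3 : (x - (k : ℝ) * (π / 18) - (m : ℝ) * (π / 3) - 2 * π * (t : ℝ)) -
        (x - (k' : ℝ) * (π / 18) - (m' : ℝ) * (π / 3) - 2 * π * (t' : ℝ)) =
        (K : ℝ) * (π / 18) := by
      push_cast [hK]
      ring
    calc |(K : ℝ) * (π / 18)| = |((x - (k : ℝ) * (π / 18) - (m : ℝ) * (π / 3) - 2 * π * (t : ℝ)) -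
            (x - (k' : ℝ) * (π / 18) - (m' : ℝ) * (π / 3) - 2 * π * (t' : ℝ)))| := by rw [h3]
      _ ≤ _ := (abs_sub _ _).trans (by linarith [abs_sub_abs_le_abs_sub x x])
  have habs : |(K : ℝ)| < 1 := by
    rw [abs_mul, abs_of_pos (by positivity : (0:ℝ) < π / 18)] at hdiff
    nlinarith [abs_nonneg ((K : ℝ))]
  have hK1 : |K| < 1 := by
    have h := habs
    rw [← Int.cast_abs] at h
    exact_mod_cast h
  have hK0 : K = 0 := by
    have := abs_lt.mp hK1; omega
  have hk : (k : ℤ) < 6 := by exact_mod_cast k.isLt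
  have hk' : (k' : ℤ) < 6 := by exact_mod_cast k'.isLt
  have hk0 : (0:ℤ) ≤ (k : ℤ) := Int.ofNat_nonneg _
  have hk0' : (0:ℤ) ≤ (k' : ℤ) := Int.ofNat_nonneg _
  rw [hK] at hK0
  have : (k : ℤ) = (k' : ℤ) := by omega
  exact Fin.ext (by exact_mod_cast this)

/-- Let θ₁, …, θₙ ∈ ℝ with n ≤ 5 be the directions of at most five edges emanating
from a common vertex.  Then there is a direction θ such that every θᵢ is at angular
distance greater than π/37 from every ray θ + m·(π/3), m ∈ ℤ. -/
theorem stmt_7 (n : ℕ) (hn : n ≤ 5) (θs : Fin n → ℝ) :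
    ∃ θ : ℝ, ∀ i : Fin n, ∀ m t : ℤ,
      |θs i - θ - (m : ℝ) * (π / 3) - 2 * π * (t : ℝ)| > π / 37 := by
  classical
  rcases Nat.eq_zero_or_pos n with hn0 | hn0
  · subst hn0; exact ⟨0, fun i => i.elim0⟩
  have hne : Nonempty (Fin n) := ⟨⟨0, hn0⟩⟩
  set Bad : Fin n → Fin 6 → Prop := fun i k =>
    ∃ m t : ℤ, |θs i - (k : ℝ) * (π / 18) - (m : ℝ) * (π / 3) - 2 * π * (t : ℝ)| ≤ π / 37
    with hBad
  have huniq : ∀ i k k', Bad i k → Bad i k' → k = k' := by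
    rintro i k k' ⟨m, t, h1⟩ ⟨m', t', h2⟩
    exact stmt_7_key (θs i) k k' m t m' t' h1 h2
  set B : Finset (Fin 6) := Finset.univ.filter (fun k => ∃ i, Bad i k) with hB
  have hcard : B.card ≤ n := by
    have : ∀ k ∈ B, ∃ i, Bad i k := by
      intro k hk
      exact (Finset.mem_filter.mp hk).2
    choose f hf using this
    have : B.card ≤ (Finset.univ : Finset (Fin n)).card := by
      apply Finset.card_le_card_of_injOn
        (fun k => if h : k ∈ B then f k h else Classical.arbitrary (Fin n))
      · intro a _; exact Finset.mem_univ _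
      · intro a ha b hb hab
        simp only [Finset.mem_coe] at ha hb
        simp only [dif_pos ha, dif_pos hb] at hab
        exact huniq _ a b (hab ▸ hf a ha) (hf b hb)
    simpa using this
  have hexists : ∃ k : Fin 6, k ∉ B := by
    by_contra h
    push_neg at h
    have : B = Finset.univ := Finset.eq_univ_iff_forall.mpr h
    have : B.card = 6 := by rw [this]; simp
    omega
  obtain ⟨k, hk⟩ := hexists
  refine ⟨(k : ℝ) * (π / 18), fun i m t => ?_⟩
  by_contra h
  push_neg at h
  exact hk (Finset.mem_filter.mpr ⟨Finset.mem_univ _, ⟨i, m, t, h⟩⟩)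
end

section
/- For every integer k ≥ 1, with α_k = arcsin(1/(2(2k+1)^2)) and r_k = (√2/(4k))·(1 - (2k+1)·tan α_k), there exists a geometric path with parameter r_k of length exactly 4k^2+6k+1 from A = (0,0) to B = (1,0) all of whose vertices lie in the square S = { (x,y) : |x - 1/2| + |y| ≤ 1/2 }; that is, there exist points p_0, …, p_N in S with N = 4k^2+6k+1, p_0 = A, p_N = B, dist(p_i, p_{i+1}) ≤ r_k for all 0 ≤ i < N, and dist(p_i, p_j) > r_k whenever |i - j| ≥ 2. -/
open Real

/-- The point (x, y) in the Euclidean plane. -/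
noncomputable def pt (x y : ℝ) : EuclideanSpace ℝ (Fin 2) :=
  (WithLp.equiv 2 (Fin 2 → ℝ)).symm ![x, y]

lemma pt_zero (x y : ℝ) : pt x y 0 = x := rfl
lemma pt_one (x y : ℝ) : pt x y 1 = y := rfl

lemma dist_pt (x1 y1 x2 y2 : ℝ) :
    dist (pt x1 y1) (pt x2 y2) = Real.sqrt ((x1 - x2)^2 + (y1 - y2)^2) := by
  rw [EuclideanSpace.dist_eq, Fin.sum_univ_two]
  simp [pt, Real.dist_eq, sq_abs]

lemma dist_rot (u1 v1 u2 v2 : ℝ) :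
    dist (pt ((u1+v1)/Real.sqrt 2) ((v1-u1)/Real.sqrt 2))
         (pt ((u2+v2)/Real.sqrt 2) ((v2-u2)/Real.sqrt 2))
      = Real.sqrt ((u1 - u2)^2 + (v1 - v2)^2) := by
  rw [dist_pt]
  congr 1
  have h2 : (Real.sqrt 2) ^ 2 = 2 := Real.sq_sqrt (by norm_num)
  have h0 : Real.sqrt 2 ≠ 0 := by positivity
  field_simp
  ring_nf
  rw [h2]; ring

lemma abs_le_sqrt_left (a b : ℝ) : |a| ≤ Real.sqrt (a^2 + b^2) := by
  rw [← Real.sqrt_sq_eq_abs]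
  exact Real.sqrt_le_sqrt (by nlinarith [sq_nonneg b])

lemma abs_le_sqrt_right (a b : ℝ) : |b| ≤ Real.sqrt (a^2 + b^2) := by
  rw [← Real.sqrt_sq_eq_abs]
  exact Real.sqrt_le_sqrt (by nlinarith [sq_nonneg a])

/-- half-diagonal: side of the rotated square -/
noncomputable def LL : ℝ := Real.sqrt 2 / 2

/-- u-coordinate (rotated frame) of vertex i -/
noncomputable def uf (k : ℕ) (t r : ℝ) (i : ℕ) : ℝ :=
  (i / (2*k+2) : ℕ) * (LL * t + r) + (i % (2*k+2) : ℕ) * (LL / (2*(k:ℝ)+1) * t)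

/-- v-coordinate (rotated frame) of vertex i -/
noncomputable def vf (k : ℕ) (i : ℕ) : ℝ :=
  if (i / (2*k+2)) % 2 = 0 then (i % (2*k+2) : ℕ) * (LL / (2*(k:ℝ)+1))
  else LL - (i % (2*k+2) : ℕ) * (LL / (2*(k:ℝ)+1))

lemma uf_eq (k : ℕ) (t r : ℝ) (q s : ℕ) (hs : s < 2*k+2) :
    uf k t r ((2*k+2)*q + s)
      = (q:ℝ) * (LL * t + r) + (s:ℝ) * (LL / (2*(k:ℝ)+1) * t) := by
  rw [uf, Nat.mul_add_div (by omega), Nat.mul_add_mod, Nat.div_eq_of_lt hs,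
    Nat.mod_eq_of_lt hs, Nat.add_zero]

lemma vf_eq (k : ℕ) (q s : ℕ) (hs : s < 2*k+2) :
    vf k ((2*k+2)*q + s)
      = if q % 2 = 0 then (s:ℝ) * (LL / (2*(k:ℝ)+1))
        else LL - (s:ℝ) * (LL / (2*(k:ℝ)+1)) := by
  rw [vf, Nat.mul_add_div (by omega), Nat.mul_add_mod, Nat.div_eq_of_lt hs,
    Nat.mod_eq_of_lt hs, Nat.add_zero]

set_option maxHeartbeats 2000000 in
/-- For every integer k ≥ 1, with α_k = arcsin(1/(2(2k+1)²)) and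
r_k = (√2/(4k))(1 - (2k+1)·tan α_k), there is a geometric path with parameter r_k
of length exactly N = 4k²+6k+1 from A = (0,0) to B = (1,0), all of whose vertices
lie in the square S = { (x,y) : |x - 1/2| + |y| ≤ 1/2 }. -/
theorem stmt_15 (k : ℕ) (hk : 1 ≤ k) (α r : ℝ)
    (hα : α = Real.arcsin (1 / (2 * (2 * (k : ℝ) + 1) ^ 2)))
    (hr : r = (Real.sqrt 2 / (4 * (k : ℝ))) * (1 - (2 * (k : ℝ) + 1) * Real.tan α))
    (N : ℕ) (hN : N = 4 * k ^ 2 + 6 * k + 1) :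
    ∃ p : ℕ → EuclideanSpace ℝ (Fin 2),
      p 0 = pt 0 0 ∧ p N = pt 1 0 ∧
      (∀ i, i ≤ N → |p i 0 - 1/2| + |p i 1| ≤ 1/2) ∧
      (∀ i, i < N → dist (p i) (p (i + 1)) ≤ r) ∧
      (∀ i j, i ≤ N → j ≤ N → 2 ≤ |(i : ℤ) - (j : ℤ)| → r < dist (p i) (p j)) := by
  -- ## numeric setup
  have hk1 : (1:ℝ) ≤ (k:ℝ) := by exact_mod_cast hk
  have hK3' : (3:ℝ) ≤ 2*(k:ℝ)+1 := by linarith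
  set K : ℝ := 2*(k:ℝ)+1 with hK
  set s : ℝ := 1/(2*K^2) with hsdef
  set c : ℝ := Real.cos α with hcdef
  set t : ℝ := Real.tan α with htdef
  set L : ℝ := LL with hLdef
  set h : ℝ := LL / (2*(k:ℝ)+1) with hhdef
  clear_value K s c t L h
  have hK3 : (3:ℝ) ≤ K := by rw [hK]; linarith
  have hKpos : (0:ℝ) < K := by linarith
  have hs_pos : 0 < s := by rw [hsdef]; positivity
  have hs_le : s ≤ 1/18 := by
    rw [hsdef, div_le_div_iff₀ (by positivity) (by norm_num)]
    nlinarith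
  have hsin : Real.sin α = s := by
    rw [hα, Real.sin_arcsin (by linarith) (by linarith)]
  have hc_eq : c = Real.sqrt (1 - s^2) := by
    rw [hcdef, hα, Real.cos_arcsin]
  have hc_le1 : c ≤ 1 := hcdef ▸ Real.cos_le_one α
  have hinv : 1/(2*K) ≤ 1/6 := by
    rw [div_le_div_iff₀ (by linarith) (by norm_num)]; linarith
  have hinvpos : 0 < 1/(2*K) := by positivity
  have hc_lb : 1 - 1/(2*K) ≤ c := by
    rw [hc_eq]
    rw [show (1:ℝ) - 1/(2*K) = Real.sqrt ((1 - 1/(2*K))^2) from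
      (Real.sqrt_sq (by linarith)).symm]
    apply Real.sqrt_le_sqrt
    rw [hsdef]
    have h2 : (0:ℝ) < K^2 := by positivity
    field_simp
    nlinarith [sq_nonneg K, sq_nonneg (K-3)]
  have hc_pos : 0 < c := by linarith
  have hcne : Real.cos α ≠ 0 := by rw [← hcdef]; exact ne_of_gt hc_pos
  have ht_eq : t * c = s := by
    rw [htdef, Real.tan_eq_sin_div_cos, hsin, hcdef, div_mul_cancel₀ _ hcne]
  have ht_pos : 0 < t := by
    have hh : t = s/c := by rw [← ht_eq]; field_simp
    rw [hh]; positivity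
  have hKt : K * t < 1 := by
    by_contra hcon
    push_neg at hcon
    have h1 : K * (t * c) = K * s := by rw [ht_eq]
    have h2 : K * s = 1/(2*K) := by rw [hsdef]; field_simp
    nlinarith [mul_le_mul_of_nonneg_right hcon hc_pos.le]
  have hL2 : L * 2 = Real.sqrt 2 := by rw [hLdef, LL]; ring
  have hLpos : 0 < L := by rw [hLdef, LL]; positivity
  have hsq2 : (Real.sqrt 2)^2 = 2 := Real.sq_sqrt (by norm_num)
  have hsq2pos : 0 < Real.sqrt 2 := by positivity
  have hr_pos : 0 < r := by
    rw [hr]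
    have hkpos : (0:ℝ) < 4*(k:ℝ) := by linarith
    exact mul_pos (div_pos hsq2pos hkpos) (by linarith)
  have hKh : K * h = L := by rw [hhdef, hLdef, hK]; field_simp
  have hh_pos : 0 < h := by rw [hhdef, LL]; positivity
  have hLid : 2*(k:ℝ)*r = L - K*(L*t) := by
    rw [hr, hK, hLdef, LL]
    have hkne : (k:ℝ) ≠ 0 := by linarith
    field_simp
    ring
  have hpyth : s^2 + c^2 = 1 := by
    rw [← hsin, hcdef]; exact Real.sin_sq_add_cos_sq α
  have hKc : K - 1/2 ≤ K * c := by
    have hmul := mul_le_mul_of_nonneg_left hc_lb hKpos.le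
    have he : K * (1 - 1/(2*K)) = K - 1/2 := by field_simp
    linarith [he ▸ hmul]
  have hrc : h ≤ r * c := by
    have hkpos : (0:ℝ) < (k:ℝ) := by linarith
    have h1 : r * c = Real.sqrt 2 / (4*(k:ℝ)) * (c - K * s) := by
      rw [hr, ← ht_eq]; ring
    have h2 : K * s = 1/(2*K) := by rw [hsdef]; field_simp
    have e : (c - 1/(2*K))*(2*K) = 2*(K*c) - 1 := by field_simp
    have key : 1/(2*K) ≤ (c - 1/(2*K))/(4*(k:ℝ)) := by
      rw [div_le_div_iff₀ (by positivity) (by positivity), e, one_mul]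
      nlinarith [hKc, hK]
    have h3 : h = Real.sqrt 2 * (1/(2*K)) := by
      rw [hhdef, LL, hK]; field_simp
    have h4 : Real.sqrt 2 / (4*(k:ℝ)) * (c - 1/(2*K))
        = Real.sqrt 2 * ((c - 1/(2*K))/(4*(k:ℝ))) := by ring
    rw [h1, h2, h3, h4]
    exact mul_le_mul_of_nonneg_left key hsq2pos.le
  have hedge2 : (h*t)^2 + h^2 ≤ r^2 := by
    have hsq : h^2 ≤ (r*c)^2 := by nlinarith [hrc, hh_pos]
    have h1 : (h*t)^2 + h^2 ≤ (r*c)^2 * t^2 + (r*c)^2 := by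
      nlinarith [mul_le_mul_of_nonneg_right hsq (sq_nonneg t)]
    have h2 : (r*c)^2 * t^2 + (r*c)^2 = r^2 * ((t*c)^2 + c^2) := by ring
    rw [ht_eq] at h2
    nlinarith
  have h2h : r < 2*h := by
    have hkpos : (0:ℝ) < (k:ℝ) := by linarith
    have key2 : (1-K*t)/(4*(k:ℝ)) < 1/K := by
      rw [div_lt_div_iff₀ (by positivity) hKpos]
      nlinarith [mul_pos (mul_pos hKpos hKpos) ht_pos]
    have h3 : 2*h = Real.sqrt 2 * (1/K) := by
      rw [hhdef, LL, hK]; field_simp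
    have h4 : r = Real.sqrt 2 * ((1-K*t)/(4*(k:ℝ))) := by rw [hr, hK]; ring
    rw [h3, h4]
    exact (mul_lt_mul_iff_right₀ hsq2pos).mpr key2
  -- ## derived identities
  have hht_pos : 0 < h*t := mul_pos hh_pos ht_pos
  have hLt_pos : 0 < L*t := mul_pos hLpos ht_pos
  have hLtr_pos : 0 < L*t + r := by linarith
  have hKht : K*(h*t) = L*t := by
    rw [show K*(h*t) = (K*h)*t from by ring, hKh]
  have hKht2 : (2*(k:ℝ)+1)*(h*t) = L*t := by rw [← hK]; exact hKht
  have hKh2 : (2*(k:ℝ)+1)*h = L := by rw [← hK]; exact hKh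
  have htotal : 2*(k:ℝ)*(L*t+r) + L*t = L := by
    linear_combination hLid - (L*t)*hK
  have hedge : Real.sqrt ((h*t)^2 + h^2) ≤ r := by
    rw [show r = Real.sqrt (r^2) from (Real.sqrt_sq hr_pos.le).symm]
    exact Real.sqrt_le_sqrt hedge2
  -- ## path coordinates
  have hyU : ∀ q ss : ℕ, ss < 2*k+2 →
      uf k t r ((2*k+2)*q + ss) = (q:ℝ) * (L*t + r) + (ss:ℝ) * (h*t) := by
    intro q ss hss
    rw [uf_eq k t r q ss hss, hhdef, hLdef]
  have hyV : ∀ q ss : ℕ, ss < 2*k+2 →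
      vf k ((2*k+2)*q + ss)
        = if q % 2 = 0 then (ss:ℝ) * h else L - (ss:ℝ) * h := by
    intro q ss hss
    rw [vf_eq k q ss hss, hhdef, hLdef]
  have hN2 : N = (2*k+2)*(2*k) + (2*k+1) := by rw [hN]; ring
  have hdivN : N / (2*k+2) = 2*k := by
    rw [hN2, Nat.mul_add_div (by omega), Nat.div_eq_of_lt (by omega)]
    omega
  set P : ℕ → EuclideanSpace ℝ (Fin 2) := fun i =>
    pt ((uf k t r i + vf k i)/Real.sqrt 2) ((vf k i - uf k t r i)/Real.sqrt 2)
    with hP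
  have hdist : ∀ m n : ℕ, dist (P m) (P n)
      = Real.sqrt ((uf k t r m - uf k t r n)^2 + (vf k m - vf k n)^2) :=
    fun m n => dist_rot _ _ _ _
  refine ⟨P, ?_, ?_, ?_, ?_, ?_⟩
  · -- start point
    show pt ((uf k t r 0 + vf k 0)/Real.sqrt 2) ((vf k 0 - uf k t r 0)/Real.sqrt 2)
        = pt 0 0
    have hu0 : uf k t r 0 = 0 := by simp [uf]
    have hv0 : vf k 0 = 0 := by simp [vf]
    rw [hu0, hv0]
    norm_num
  · -- end point
    show pt ((uf k t r N + vf k N)/Real.sqrt 2) ((vf k N - uf k t r N)/Real.sqrt 2)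
        = pt 1 0
    have hu : uf k t r N = L := by
      rw [hN2, hyU _ _ (by omega)]
      push_cast
      linarith only [hKht2, htotal]
    have hv : vf k N = L := by
      rw [hN2, hyV _ _ (by omega)]
      simp only [Nat.mul_mod_right, if_pos rfl]
      push_cast
      linarith only [hKh2]
    rw [hu, hv]
    rw [show (L+L)/Real.sqrt 2 = 1 by
      rw [show L+L = Real.sqrt 2 by linarith only [hL2], div_self (ne_of_gt hsq2pos)]]
    rw [show (L-L)/Real.sqrt 2 = 0 by rw [sub_self, zero_div]]
  · -- membership in the square
    intro i hi
    set q : ℕ := i / (2*k+2) with hq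
    set ss : ℕ := i % (2*k+2) with hss
    have hie : i = (2*k+2)*q + ss := (Nat.div_add_mod i (2*k+2)).symm
    have hsslt : ss < 2*k+2 := Nat.mod_lt _ (by omega)
    have hqle : q ≤ 2*k := by
      have h1 : i / (2*k+2) ≤ N / (2*k+2) := Nat.div_le_div_right hi
      rw [hdivN] at h1; exact h1
    have hqr : (q:ℝ) ≤ 2*(k:ℝ) := by exact_mod_cast hqle
    have hssr : (ss:ℝ) ≤ 2*(k:ℝ)+1 := by
      have : ss ≤ 2*k+1 := by omega
      exact_mod_cast this
    have hqnn : (0:ℝ) ≤ (q:ℝ) := Nat.cast_nonneg q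
    have hssnn : (0:ℝ) ≤ (ss:ℝ) := Nat.cast_nonneg ss
    -- bounds on u and v
    have hub : 0 ≤ uf k t r i ∧ uf k t r i ≤ L := by
      rw [hie, hyU q ss hsslt]
      constructor
      · have b1 : 0 ≤ (q:ℝ)*(L*t+r) := mul_nonneg hqnn hLtr_pos.le
        have b2 : 0 ≤ (ss:ℝ)*(h*t) := mul_nonneg hssnn hht_pos.le
        linarith only [b1, b2]
      · have a1 := mul_le_mul_of_nonneg_right hqr hLtr_pos.le
        have a2 := mul_le_mul_of_nonneg_right hssr hht_pos.le
        linarith only [a1, a2, hKht2, htotal]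
    have hvb : 0 ≤ vf k i ∧ vf k i ≤ L := by
      rw [hie, hyV q ss hsslt]
      have a2 := mul_le_mul_of_nonneg_right hssr hh_pos.le
      have a3 : 0 ≤ (ss:ℝ)*h := by positivity
      rcases Nat.even_or_odd q with hpar | hpar
      · rw [if_pos (Nat.even_iff.mp hpar)]
        constructor
        · exact a3
        · linarith only [a2, hKh2]
      · rw [if_neg (by rw [Nat.odd_iff.mp hpar]; norm_num)]
        constructor
        · linarith only [a2, hKh2]
        · linarith only [a3]
    -- the diamond inequality
    have e0 : P i 0 = (uf k t r i + vf k i)/Real.sqrt 2 := rfl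
    have e1 : P i 1 = (vf k i - uf k t r i)/Real.sqrt 2 := rfl
    have h12 : (1:ℝ)/2 = L/Real.sqrt 2 := by
      rw [hLdef, LL, eq_div_iff (ne_of_gt hsq2pos)]
      ring
    rw [e0, e1, h12, show (uf k t r i + vf k i)/Real.sqrt 2 - L/Real.sqrt 2
        = (uf k t r i + vf k i - L)/Real.sqrt 2 from (sub_div _ _ _).symm]
    rw [abs_div, abs_div, abs_of_pos hsq2pos, ← add_div]
    gcongr
    obtain ⟨hu0, huL⟩ := hub
    obtain ⟨hv0, hvL⟩ := hvb
    rcases abs_cases (uf k t r i + vf k i - L) with ⟨e2,_⟩ | ⟨e2,_⟩ <;>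
      rcases abs_cases (vf k i - uf k t r i) with ⟨e3,_⟩ | ⟨e3,_⟩ <;>
      rw [e2, e3] <;> linarith only [hu0, huL, hv0, hvL]
  · -- consecutive distances
    intro i hi
    set q : ℕ := i / (2*k+2) with hq
    set ss : ℕ := i % (2*k+2) with hss
    have hie : i = (2*k+2)*q + ss := (Nat.div_add_mod i (2*k+2)).symm
    have hsslt : ss < 2*k+2 := Nat.mod_lt _ (by omega)
    rw [hdist]
    by_cases hcase : ss = 2*k+1
    · -- flat edge
      have hi1 : i + 1 = (2*k+2)*(q+1) + 0 := by
        rw [hie, hcase, Nat.mul_succ]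
        generalize (2*k+2)*q = X
        omega
      rw [hi1, hie, hcase, hyU q (2*k+1) (by omega), hyU (q+1) 0 (by omega),
        hyV q (2*k+1) (by omega), hyV (q+1) 0 (by omega)]
      have hKcast : ((2*k+1:ℕ):ℝ) = K := by rw [hK]; push_cast; ring
      rcases Nat.mod_two_eq_zero_or_one q with hq2 | hq2
      · rw [if_pos hq2, if_neg (by omega)]
        refine le_of_eq ?_
        conv_rhs => rw [← Real.sqrt_sq hr_pos.le]
        congr 1
        rw [hKcast]
        push_cast
        linear_combination (K*(h*t) - L*t - 2*r) * hKht + (K*h - L) * hKh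
      · rw [if_neg (by omega), if_pos (by omega)]
        refine le_of_eq ?_
        conv_rhs => rw [← Real.sqrt_sq hr_pos.le]
        congr 1
        rw [hKcast]
        push_cast
        linear_combination (K*(h*t) - L*t - 2*r) * hKht + (K*h - L) * hKh
    · -- slant edge
      have hi1 : i + 1 = (2*k+2)*q + (ss+1) := by rw [hie, Nat.add_assoc]
      rw [hi1, hie, hyU q ss hsslt, hyU q (ss+1) (by omega),
        hyV q ss hsslt, hyV q (ss+1) (by omega)]
      rcases Nat.mod_two_eq_zero_or_one q with hq2 | hq2
      · rw [if_pos hq2, if_pos hq2]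
        refine le_trans (le_of_eq ?_) hedge
        congr 1
        push_cast
        ring
      · rw [if_neg (by omega), if_neg (by omega)]
        refine le_trans (le_of_eq ?_) hedge
        congr 1
        push_cast
        ring
  · -- non-adjacent vertices
    suffices key : ∀ i j, i ≤ N → j ≤ N → i + 2 ≤ j → r < dist (P i) (P j) by
      intro i j hi hj hij
      have hij' : i + 2 ≤ j ∨ j + 2 ≤ i := by
        rcases abs_cases ((i:ℤ) - (j:ℤ)) with ⟨e,_⟩ | ⟨e,_⟩ <;> rw [e] at hij <;> omega
      rcases hij' with hc | hc
      · exact key i j hi hj hc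
      · rw [dist_comm]; exact key j i hj hi hc
    intro i j hi hj hij
    set qi : ℕ := i / (2*k+2) with hqi
    set si : ℕ := i % (2*k+2) with hsi
    set qj : ℕ := j / (2*k+2) with hqj
    set sj : ℕ := j % (2*k+2) with hsj
    have hie : i = (2*k+2)*qi + si := (Nat.div_add_mod i (2*k+2)).symm
    have hje : j = (2*k+2)*qj + sj := (Nat.div_add_mod j (2*k+2)).symm
    have hsilt : si < 2*k+2 := Nat.mod_lt _ (by omega)
    have hsjlt : sj < 2*k+2 := Nat.mod_lt _ (by omega)
    have hqq : qi ≤ qj := Nat.div_le_div_right (by omega)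
    rw [hdist, hie, hje, hyU qi si hsilt, hyU qj sj hsjlt,
      hyV qi si hsilt, hyV qj sj hsjlt]
    rcases (by omega : qi = qj ∨ qj = qi + 1 ∨ qi + 2 ≤ qj) with hc | hc | hc
    · -- same slant: use v-coordinates
      have hss2 : si + 2 ≤ sj := by
        rw [hc] at hie
        rw [hie, hje] at hij
        generalize (2*k+2)*qj = X at hij
        omega
      have hss2r : (si:ℝ) + 2 ≤ (sj:ℝ) := by exact_mod_cast hss2
      have hvgap : r < ((sj:ℝ) - si)*h := by
        have M := mul_le_mul_of_nonneg_right
          (by linarith only [hss2r] : (2:ℝ) ≤ (sj:ℝ) - si) hh_pos.le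
        linarith only [M, h2h]
      rw [hc]
      rcases Nat.mod_two_eq_zero_or_one qj with hq2 | hq2
      · rw [if_pos hq2, if_pos hq2]
        refine lt_of_lt_of_le ?_ ((neg_le_abs _).trans (abs_le_sqrt_right _ _))
        have : -((si:ℝ)*h - (sj:ℝ)*h) = ((sj:ℝ) - si)*h := by ring
        rw [this]; exact hvgap
      · rw [if_neg (by omega), if_neg (by omega)]
        refine lt_of_lt_of_le ?_ ((le_abs_self _).trans (abs_le_sqrt_right _ _))
        have : (L - (si:ℝ)*h) - (L - (sj:ℝ)*h) = ((sj:ℝ) - si)*h := by ring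
        rw [this]; exact hvgap
    · -- adjacent slants: u-gap is r + (positive)
      have hsbound : si ≤ sj + 2*k := by
        rw [hc, Nat.mul_succ] at hje
        rw [hie, hje] at hij
        generalize (2*k+2)*qi = X at hij
        omega
      have hsr : (si:ℝ) ≤ (sj:ℝ) + 2*(k:ℝ) := by exact_mod_cast hsbound
      have hqr : (qj:ℝ) = (qi:ℝ) + 1 := by rw [hc]; push_cast; ring
      refine lt_of_lt_of_le ?_ ((neg_le_abs _).trans (abs_le_sqrt_left _ _))
      have hA2 : ((qj:ℝ))*(L*t+r) = ((qi:ℝ))*(L*t+r) + (L*t+r) := by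
        rw [hqr]; ring
      have hA1 : (-(2*(k:ℝ)))*(h*t) ≤ ((sj:ℝ) - si)*(h*t) :=
        mul_le_mul_of_nonneg_right (by linarith only [hsr]) hht_pos.le
      linarith only [hA1, hA2, hKht2, hht_pos]
    · -- far slants
      have hq2r : (qi:ℝ) + 2 ≤ (qj:ℝ) := by exact_mod_cast hc
      have hsir : (si:ℝ) ≤ 2*(k:ℝ)+1 := by
        have : si ≤ 2*k+1 := by omega
        exact_mod_cast this
      have hsjnn : (0:ℝ) ≤ (sj:ℝ) := Nat.cast_nonneg sj
      refine lt_of_lt_of_le ?_ ((neg_le_abs _).trans (abs_le_sqrt_left _ _))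
      have hA2 : 2*(L*t+r) ≤ ((qj:ℝ) - qi)*(L*t+r) :=
        mul_le_mul_of_nonneg_right (by linarith only [hq2r]) hLtr_pos.le
      have hA1 : (-(2*(k:ℝ)+1))*(h*t) ≤ ((sj:ℝ) - si)*(h*t) :=
        mul_le_mul_of_nonneg_right (by linarith only [hsir, hsjnn]) hht_pos.le
      linarith only [hA1, hA2, hKht2, hLt_pos, hr_pos]
end
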